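/- Let K_n be the set of n×n lower triangular (0,1)-matrices with unit diagonal, let Z = Y Y^T for some Y ∈ K_n, and let Z_0 = Y_0 Y_0^T where (Y_0)_{ij} = 0 if i < j, 1 if i = j, 1 if i > j with i+j odd, and 0 otherwise. Then |Z^{-1}| ≤ |Z_0^{-1}| entrywise. -/

import Mathlib

open Matrix Finset

/-- Fibonacci-like bound sequence 1,1,1,2,3,5,8,... -/
def aaSeq : ℕ → ℕ
  | 0 => 1
  | 1 => 1
  | 2 => 1
  | (d+3) => aaSeq (d+2) + aaSeq (d+1)

lemma aaSeq_pos : ∀ d, 0 < aaSeq d := by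
  intro d
  induction d using Nat.strong_induction_on with
  | _ d ih =>
    match d with
    | 0 => simp [aaSeq]
    | 1 => simp [aaSeq]
    | 2 => simp [aaSeq]
    | (e+3) => exact Nat.add_pos_left (ih (e+2) (by omega)) _

lemma aaSeq_mono : Monotone aaSeq := by
  apply monotone_nat_of_le_succ
  intro d
  match d with
  | 0 => simp [aaSeq]
  | 1 => simp [aaSeq]
  | (e+2) => exact Nat.le_add_right _ _ |>.trans (le_of_eq rfl)

/-- partial alternating-parity sum -/
lemma aaSeq_parity_sum : ∀ d, 1 ≤ d →
    (∑ e ∈ Finset.range d, if e % 2 = d % 2 then 0 else aaSeq e) = aaSeq d := by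
  have key : ∀ d, ((∑ e ∈ Finset.range (d+1), if e % 2 = (d+1) % 2 then 0 else aaSeq e) = aaSeq (d+1))
      ∧ ((∑ e ∈ Finset.range (d+2), if e % 2 = (d+2) % 2 then 0 else aaSeq e) = aaSeq (d+2)) := by
    intro d
    induction d with
    | zero => constructor <;> decide
    | succ m ih =>
      refine ⟨ih.2, ?_⟩
      rw [Finset.sum_range_succ, Finset.sum_range_succ]
      have h1 : ((m+2) % 2 = (m+3) % 2) = False := by simp; omega
      have h2 : ((m+1) % 2 = (m+3) % 2) = True := by simp; omega
      have h3 : ∀ e, (e % 2 = (m+1) % 2) = (e % 2 = (m+3) % 2) := by intro e; simp; omega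
      simp only [h1, h2, if_false, if_true, add_zero]
      conv_lhs => rw [show (∑ e ∈ Finset.range (m+1), if e % 2 = (m+3) % 2 then 0 else aaSeq e)
        = ∑ e ∈ Finset.range (m+1), if e % 2 = (m+1) % 2 then 0 else aaSeq e from
        Finset.sum_congr rfl (fun e _ => if_congr (iff_of_eq (h3 e).symm) rfl rfl)]
      rw [ih.1]
      show aaSeq (m+1) + aaSeq (m+2) = aaSeq (m+3)
      rw [aaSeq]
      omega
  intro d hd
  match d, hd with
  | (e+1), _ => exact (key e).1


noncomputable def y0fun (i k : ℕ) : ℝ :=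
  if i < k then 0 else if i = k then 1 else if i % 2 ≠ k % 2 then 1 else 0

noncomputable def ccfun (i j : ℕ) : ℝ :=
  if j ≤ i then (-1:ℝ)^(i+j) * (aaSeq (i-j) : ℝ) else 0

lemma ccfun_of_lt {i j : ℕ} (h : i < j) : ccfun i j = 0 := by
  simp [ccfun, Nat.not_le.2 h]

lemma neg_one_pow_opp {e d : ℕ} (h : e % 2 ≠ d % 2) : ((-1:ℝ))^e = -((-1:ℝ))^d := by
  rcases Nat.even_or_odd e with he | he
  · rcases Nat.even_or_odd d with hd | hd
    · exfalso; rw [Nat.even_iff] at he hd; omega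
    · simp [he.neg_one_pow, hd.neg_one_pow]
  · rcases Nat.even_or_odd d with hd | hd
    · simp [he.neg_one_pow, hd.neg_one_pow]
    · exfalso; rw [Nat.odd_iff] at he hd; omega

lemma y0c (n i j : ℕ) (hi : i < n) (hj : j < n) :
    (∑ m ∈ Finset.range n, y0fun i m * ccfun m j) = if i = j then 1 else 0 := by
  have hsub : (∑ m ∈ Finset.range (i+1), y0fun i m * ccfun m j)
      = ∑ m ∈ Finset.range n, y0fun i m * ccfun m j := by
    apply Finset.sum_subset (Finset.range_subset_range.2 (by omega))
    intro m _ hm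
    rw [Finset.mem_range, not_lt] at hm
    have : y0fun i m = 0 := by simp [y0fun, show i < m by omega]
    rw [this, zero_mul]
  rw [← hsub, Finset.sum_range_succ]
  have hyii : y0fun i i = 1 := by simp [y0fun]
  rw [hyii, one_mul]
  have hterm : ∀ m, m < i → y0fun i m * ccfun m j
      = if i % 2 = m % 2 then 0 else ccfun m j := by
    intro m hm
    by_cases hp : i % 2 = m % 2 <;>
      simp [y0fun, show ¬ i < m by omega, show i ≠ m by omega, hp]
  rw [Finset.sum_congr rfl (fun m hm => hterm m (Finset.mem_range.1 hm))]
  rcases lt_trichotomy i j with hij | hij | hij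
  · -- i < j : everything vanishes
    have : ∀ m ∈ Finset.range i, (if i % 2 = m % 2 then 0 else ccfun m j) = 0 := by
      intro m hm
      rw [Finset.mem_range] at hm
      by_cases hp : i % 2 = m % 2 <;> simp [hp, ccfun_of_lt (show m < j by omega)]
    rw [Finset.sum_congr rfl this]
    simp [show i ≠ j by omega, ccfun_of_lt hij]
  · subst hij
    have : ∀ m ∈ Finset.range i, (if i % 2 = m % 2 then 0 else ccfun m i) = 0 := by
      intro m hm
      rw [Finset.mem_range] at hm
      by_cases hp : i % 2 = m % 2 <;> simp [hp, ccfun_of_lt hm]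
    rw [Finset.sum_congr rfl this]
    simp [ccfun, aaSeq]
  · -- j < i
    set d := i - j with hd
    have hd1 : 1 ≤ d := by omega
    have hrestrict : (∑ m ∈ Finset.Ico j i, if i % 2 = m % 2 then 0 else ccfun m j)
        = ∑ m ∈ Finset.range i, if i % 2 = m % 2 then 0 else ccfun m j := by
      apply Finset.sum_subset
      · intro m hm; rw [Finset.mem_Ico] at hm; exact Finset.mem_range.2 hm.2
      · intro m hm hm2
        rw [Finset.mem_range] at hm
        rw [Finset.mem_Ico, not_and_or, not_le] at hm2
        have hmj : m < j := by omega
        by_cases hp : i % 2 = m % 2 <;> simp [hp, ccfun_of_lt hmj]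
    rw [← hrestrict, Finset.sum_Ico_eq_sum_range]
    have hpt : ∀ e ∈ Finset.range (i - j), (if i % 2 = (j + e) % 2 then 0 else ccfun (j + e) j)
        = (-((-1:ℝ))^(i+j)) * (if e % 2 = d % 2 then (0:ℝ) else (aaSeq e : ℝ)) := by
      intro e _
      have hparity : (i % 2 = (j + e) % 2) ↔ (e % 2 = d % 2) := by omega
      by_cases hp : e % 2 = d % 2
      · simp [hparity.2 hp, hp]
      · have h2 : ¬ (i % 2 = (j + e) % 2) := fun h => hp (hparity.1 h)
        rw [if_neg h2, if_neg hp]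
        have hcc : ccfun (j + e) j = ((-1:ℝ))^(j+e+j) * (aaSeq e : ℝ) := by
          simp [ccfun, show j ≤ j + e by omega]
        rw [hcc]
        have : ((-1:ℝ))^(j+e+j) = -((-1:ℝ))^(i+j) := by
          apply neg_one_pow_opp; omega
        rw [this]
    rw [Finset.sum_congr rfl hpt, ← Finset.mul_sum]
    have hsum : (∑ e ∈ Finset.range (i-j), if e % 2 = d % 2 then (0:ℝ) else (aaSeq e : ℝ))
        = (aaSeq d : ℝ) := by
      have hcast : ∀ e, (if e % 2 = d % 2 then (0:ℝ) else (aaSeq e : ℝ))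
          = ((if e % 2 = d % 2 then 0 else aaSeq e : ℕ) : ℝ) := by
        intro e; split <;> simp
      rw [← hd]
      simp_rw [hcast]
      rw [← Nat.cast_sum, aaSeq_parity_sum d hd1]
    rw [hsum]
    have hccij : ccfun i j = ((-1:ℝ))^(i+j) * (aaSeq d : ℝ) := by
      simp [ccfun, show j ≤ i by omega, ← hd]
    rw [hccij, if_neg (show i ≠ j by omega)]
    ring


lemma inv_entry_facts {n : ℕ} (Y : Matrix (Fin n) (Fin n) ℝ)
    (hlower : ∀ i j, i < j → Y i j = 0)
    (h01 : ∀ i j, Y i j = 0 ∨ Y i j = 1)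
    (hdiag : ∀ i, Y i i = 1) :
    (∀ i j : Fin n, (i:ℕ) < (j:ℕ) → Y⁻¹ i j = 0) ∧
    (∀ i j : Fin n, |Y⁻¹ i j| ≤ (aaSeq ((i:ℕ) - (j:ℕ)) : ℝ)) := by
  have btY : Y.BlockTriangular OrderDual.toDual := fun i j h => hlower i j h
  have hdet : Y.det = 1 := by
    rw [Matrix.det_of_lowerTriangular Y btY]
    exact Finset.prod_eq_one fun i _ => hdiag i
  have hU : IsUnit Y.det := by rw [hdet]; exact isUnit_one
  haveI := Y.invertibleOfIsUnitDet hU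
  have btB : Y⁻¹.BlockTriangular OrderDual.toDual :=
    Matrix.blockTriangular_inv_of_blockTriangular btY
  set B := Y⁻¹ with hBdef
  have hBzero : ∀ i j : Fin n, (i:ℕ) < (j:ℕ) → B i j = 0 := by
    intro i j h
    exact btB (show OrderDual.toDual j < OrderDual.toDual i from h)
  have hYB : Y * B = 1 := Matrix.mul_nonsing_inv Y hU
  have hent : ∀ i j : Fin n, ∑ k : Fin n, Y i k * B k j = if i = j then 1 else 0 := by
    intro i j
    have := congrFun (congrFun hYB i) j
    simpa [Matrix.mul_apply, Matrix.one_apply] using this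
  have hBdiag : ∀ j : Fin n, B j j = 1 := by
    intro j
    have h := hent j j
    rw [if_pos rfl] at h
    rw [Finset.sum_eq_single j] at h
    · rwa [hdiag, one_mul] at h
    · intro k _ hk
      rcases lt_or_gt_of_ne (fun h' : (k:ℕ) = (j:ℕ) => hk (Fin.ext h')) with hlt | hgt
      · rw [hBzero k j hlt, mul_zero]
      · rw [hlower j k (by exact hgt), zero_mul]
    · simp
  -- the key relation
  have hrel : ∀ i j : Fin n, (j:ℕ) < (i:ℕ) →
      B i j = -∑ k : Fin n, (if (j:ℕ) ≤ (k:ℕ) ∧ (k:ℕ) < (i:ℕ) then Y i k * B k j else 0) := by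
    intro i j hij
    have h := hent i j
    rw [if_neg (fun h' => by rw [h'] at hij; omega)] at h
    have hsplit : ∀ k : Fin n, Y i k * B k j =
        (if k = i then B i j else 0) +
        (if (j:ℕ) ≤ (k:ℕ) ∧ (k:ℕ) < (i:ℕ) then Y i k * B k j else 0) := by
      intro k
      by_cases hk : k = i
      · subst hk
        rw [if_pos rfl, if_neg (by omega), hdiag, one_mul, add_zero]
      · rw [if_neg hk, zero_add]
        by_cases hk2 : (j:ℕ) ≤ (k:ℕ) ∧ (k:ℕ) < (i:ℕ)
        · rw [if_pos hk2]
        · rw [if_neg hk2]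
          rcases Nat.lt_or_ge (k:ℕ) (j:ℕ) with hlt | hge
          · rw [hBzero k j hlt, mul_zero]
          · have : (i:ℕ) < (k:ℕ) := by
              rcases Nat.lt_or_ge (k:ℕ) (i:ℕ) with h1 | h1
              · exact absurd ⟨hge, h1⟩ hk2
              · rcases Nat.eq_or_lt_of_le h1 with h2 | h2
                · exact absurd (Fin.ext h2.symm) hk
                · exact h2
            rw [hlower i k this, zero_mul]
    rw [Finset.sum_congr rfl (fun k _ => hsplit k), Finset.sum_add_distrib,
      Finset.sum_ite_eq' Finset.univ i (fun _ => B i j), if_pos (Finset.mem_univ i)] at h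
    linarith
  -- prefix positive/negative sums for a fixed column j
  refine ⟨hBzero, ?_⟩
  intro i j
  set pos : ℕ → ℝ := fun t =>
    ∑ k : Fin n, if (j:ℕ) ≤ (k:ℕ) ∧ (k:ℕ) < (j:ℕ) + t then max (B k j) 0 else 0 with hposdef
  set neg : ℕ → ℝ := fun t =>
    ∑ k : Fin n, if (j:ℕ) ≤ (k:ℕ) ∧ (k:ℕ) < (j:ℕ) + t then max (-(B k j)) 0 else 0 with hnegdef
  have hpos_nonneg : ∀ t, 0 ≤ pos t := by
    intro t
    apply Finset.sum_nonneg
    intro k _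
    split
    · exact le_max_right _ _
    · exact le_refl 0
  have hneg_nonneg : ∀ t, 0 ≤ neg t := by
    intro t
    apply Finset.sum_nonneg
    intro k _
    split
    · exact le_max_right _ _
    · exact le_refl 0
  -- step decomposition
  have hdelta : ∀ (f : Fin n → ℝ) (t : ℕ),
      (∑ k : Fin n, if (j:ℕ) ≤ (k:ℕ) ∧ (k:ℕ) < (j:ℕ) + (t+1) then max (f k) 0 else 0)
      = (∑ k : Fin n, if (j:ℕ) ≤ (k:ℕ) ∧ (k:ℕ) < (j:ℕ) + t then max (f k) 0 else 0)
        + (∑ k : Fin n, if (k:ℕ) = (j:ℕ) + t then max (f k) 0 else 0) := by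
    intro f t
    rw [← Finset.sum_add_distrib]
    apply Finset.sum_congr rfl
    intro k _
    by_cases h1 : (j:ℕ) ≤ (k:ℕ) ∧ (k:ℕ) < (j:ℕ) + t
    · rw [if_pos ⟨h1.1, by omega⟩, if_pos h1, if_neg (by omega), add_zero]
    · by_cases h2 : (k:ℕ) = (j:ℕ) + t
      · rw [if_pos ⟨by omega, by omega⟩, if_neg h1, if_pos h2, zero_add]
      · rw [if_neg (by omega), if_neg h1, if_neg h2, add_zero]
  have hdelta_big : ∀ (f : Fin n → ℝ) (t : ℕ), ¬ ((j:ℕ) + t < n) →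
      (∑ k : Fin n, if (k:ℕ) = (j:ℕ) + t then max (f k) 0 else 0) = 0 := by
    intro f t ht
    apply Finset.sum_eq_zero
    intro k _
    rw [if_neg (by have := k.isLt; omega)]
  have hdelta_val : ∀ (f : Fin n → ℝ) (t : ℕ) (h : (j:ℕ) + t < n),
      (∑ k : Fin n, if (k:ℕ) = (j:ℕ) + t then max (f k) 0 else 0)
      = max (f ⟨(j:ℕ) + t, h⟩) 0 := by
    intro f t h
    rw [Finset.sum_eq_single (⟨(j:ℕ) + t, h⟩ : Fin n)]
    · rw [if_pos rfl]
    · intro k _ hk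
      rw [if_neg (fun hc => hk (Fin.ext hc))]
    · simp
  have hpos_succ : ∀ t, pos (t+1) = pos t
      + (∑ k : Fin n, if (k:ℕ) = (j:ℕ) + t then max (B k j) 0 else 0) :=
    fun t => hdelta (fun k => B k j) t
  have hneg_succ : ∀ t, neg (t+1) = neg t
      + (∑ k : Fin n, if (k:ℕ) = (j:ℕ) + t then max (-(B k j)) 0 else 0) :=
    fun t => hdelta (fun k => -(B k j)) t
  have hSbound : ∀ (i' : Fin n) (t : ℕ), (i':ℕ) = (j:ℕ) + t →
      -(neg t) ≤ (∑ k : Fin n, if (j:ℕ) ≤ (k:ℕ) ∧ (k:ℕ) < (i':ℕ) then Y i' k * B k j else 0)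
      ∧ (∑ k : Fin n, if (j:ℕ) ≤ (k:ℕ) ∧ (k:ℕ) < (i':ℕ) then Y i' k * B k j else 0) ≤ pos t := by
    intro i' t hi't
    have hcond : ∀ k : Fin n, ((j:ℕ) ≤ (k:ℕ) ∧ (k:ℕ) < (i':ℕ)) ↔ ((j:ℕ) ≤ (k:ℕ) ∧ (k:ℕ) < (j:ℕ) + t) := by
      intro k; rw [hi't]
    have hub : ∀ k : Fin n, Y i' k * B k j ≤ max (B k j) 0 := by
      intro k
      rcases h01 i' k with h0 | h1
      · rw [h0, zero_mul]; exact le_max_right _ _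
      · rw [h1, one_mul]; exact le_max_left _ _
    have hlb : ∀ k : Fin n, -(max (-(B k j)) 0) ≤ Y i' k * B k j := by
      intro k
      rcases h01 i' k with h0 | h1
      · rw [h0, zero_mul]
        simp only [neg_nonpos]
        exact le_max_right _ _
      · rw [h1, one_mul]
        rw [neg_le]
        exact le_max_left _ _
    constructor
    · rw [neg_le, ← Finset.sum_neg_distrib]
      apply Finset.sum_le_sum
      intro k _
      by_cases hk : (j:ℕ) ≤ (k:ℕ) ∧ (k:ℕ) < (i':ℕ)
      · rw [if_pos hk, if_pos ((hcond k).1 hk)]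
        rw [neg_le]
        exact hlb k
      · rw [if_neg hk, if_neg (fun hc => hk ((hcond k).2 hc)), neg_zero]
    · apply Finset.sum_le_sum
      intro k _
      by_cases hk : (j:ℕ) ≤ (k:ℕ) ∧ (k:ℕ) < (i':ℕ)
      · rw [if_pos hk, if_pos ((hcond k).1 hk)]
        exact hub k
      · rw [if_neg hk, if_neg (fun hc => hk ((hcond k).2 hc))]
  have hpos0 : pos 0 = 0 := Finset.sum_eq_zero (fun k _ => if_neg (by omega))
  have hneg0 : neg 0 = 0 := Finset.sum_eq_zero (fun k _ => if_neg (by omega))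
  have haa3 : ∀ t : ℕ, (aaSeq (t+3) : ℝ) = (aaSeq (t+2) : ℝ) + (aaSeq (t+1) : ℝ) := by
    intro t
    rw [show aaSeq (t+3) = aaSeq (t+2) + aaSeq (t+1) from rfl]
    push_cast; ring
  have hmono : ∀ s t : ℕ, s ≤ t → (aaSeq s : ℝ) ≤ (aaSeq t : ℝ) :=
    fun s t h => Nat.cast_le.2 (aaSeq_mono h)
  have claim : ∀ t : ℕ, pos (t+1) ≤ (aaSeq (t+1) : ℝ) ∧ neg (t+1) ≤ (aaSeq (t+1) : ℝ)
      ∧ pos (t+1) + neg (t+1) ≤ (aaSeq (t+2) : ℝ) := by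
    intro t
    induction t with
    | zero =>
      have hjn : (j:ℕ) + 0 < n := by have := j.isLt; omega
      have hjeq : (⟨(j:ℕ) + 0, hjn⟩ : Fin n) = j := Fin.ext (by simp)
      have hp : pos 1 = 1 := by
        rw [hpos_succ 0, hpos0, hdelta_val (fun k => B k j) 0 hjn, hjeq, hBdiag j]
        norm_num
      have hn : neg 1 = 0 := by
        rw [hneg_succ 0, hneg0, hdelta_val (fun k => -(B k j)) 0 hjn, hjeq, hBdiag j]
        norm_num
      refine ⟨?_, ?_, ?_⟩ <;>
        simp [hp, hn, show aaSeq 1 = 1 from rfl, show aaSeq 2 = 1 from rfl]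
    | succ t ih =>
      obtain ⟨h1, h2, h3⟩ := ih
      by_cases h : (j:ℕ) + (t+1) < n
      · set i' : Fin n := ⟨(j:ℕ) + (t+1), h⟩ with hi'
        have hi'v : (i':ℕ) = (j:ℕ) + (t+1) := rfl
        set b := B i' j with hbdef
        have hb := hrel i' j (by omega)
        obtain ⟨hS1, hS2⟩ := hSbound i' (t+1) hi'v
        have hblb : -(pos (t+1)) ≤ b := by rw [hbdef, hb]; linarith
        have hbub : b ≤ neg (t+1) := by rw [hbdef, hb]; linarith
        have hps : pos (t+2) = pos (t+1) + max b 0 := by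
          rw [hpos_succ (t+1), hdelta_val (fun k => B k j) (t+1) h]
        have hns : neg (t+2) = neg (t+1) + max (-b) 0 := by
          rw [hneg_succ (t+1), hdelta_val (fun k => -(B k j)) (t+1) h]
        have habs : max b 0 + max (-b) 0 = |b| := max_zero_add_max_neg_zero_eq_abs_self b
        have hmaxb : max b 0 ≤ neg (t+1) := max_le hbub (hneg_nonneg _)
        have hmaxnb : max (-b) 0 ≤ pos (t+1) := max_le (by linarith) (hpos_nonneg _)
        have habsb : |b| ≤ (aaSeq (t+1) : ℝ) := abs_le.2 ⟨by linarith, by linarith⟩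
        refine ⟨?_, ?_, ?_⟩
        · rw [hps]; linarith
        · rw [hns]; linarith
        · rw [hps, hns, haa3 t]
          have : pos (t+1) + max b 0 + (neg (t+1) + max (-b) 0)
              = (pos (t+1) + neg (t+1)) + |b| := by rw [← habs]; ring
          rw [this]; linarith
      · have hps : pos (t+2) = pos (t+1) := by
          rw [hpos_succ (t+1), hdelta_big (fun k => B k j) (t+1) h, add_zero]
        have hns : neg (t+2) = neg (t+1) := by
          rw [hneg_succ (t+1), hdelta_big (fun k => -(B k j)) (t+1) h, add_zero]
        have m1 := hmono (t+1) (t+2) (by omega)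
        have m2 := hmono (t+2) (t+3) (by omega)
        exact ⟨by rw [hps]; linarith, by rw [hns]; linarith, by rw [hps, hns]; linarith⟩
  -- conclude
  rcases lt_trichotomy (i:ℕ) (j:ℕ) with hij | hij | hij
  · rw [hBzero i j hij]
    simp
  · have : i = j := Fin.ext hij
    subst this
    rw [hBdiag i]
    simp [show (i:ℕ) - (i:ℕ) = 0 by omega, show aaSeq 0 = 1 from rfl]
  · set t := (i:ℕ) - (j:ℕ) - 1 with ht
    have hiv : (i:ℕ) = (j:ℕ) + (t+1) := by omega
    have hb := hrel i j hij
    obtain ⟨hS1, hS2⟩ := hSbound i (t+1) hiv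
    obtain ⟨h1, h2, _⟩ := claim t
    have : (i:ℕ) - (j:ℕ) = t + 1 := by omega
    rw [this]
    apply abs_le.2
    constructor
    · rw [hb]; linarith
    · rw [hb]; linarith


/-- Theorem 2.4: `|Z⁻¹| ≤ |Z₀⁻¹|` entrywise for every `Z = YYᵀ` with `Y` a
lower triangular (0,1)-matrix with unit diagonal. -/
theorem stmt_13 (n : ℕ) (Y : Matrix (Fin n) (Fin n) ℝ)
    (hlower : ∀ i j, i < j → Y i j = 0)
    (h01 : ∀ i j, Y i j = 0 ∨ Y i j = 1)
    (hdiag : ∀ i, Y i i = 1)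
    (Z : Matrix (Fin n) (Fin n) ℝ) (hZ : Z = Y * Yᵀ)
    (Y₀ : Matrix (Fin n) (Fin n) ℝ)
    (hY₀ : ∀ i j : Fin n, Y₀ i j =
      if i < j then 0 else if i = j then 1 else
        if (i : ℕ) % 2 ≠ (j : ℕ) % 2 then 1 else 0)
    (Z₀ : Matrix (Fin n) (Fin n) ℝ) (hZ₀ : Z₀ = Y₀ * Y₀ᵀ) :
    ∀ i j : Fin n, |Z⁻¹ i j| ≤ |Z₀⁻¹ i j| := by
  obtain ⟨hB0, hBb⟩ := inv_entry_facts Y hlower h01 hdiag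
  set B := Y⁻¹ with hBdef
  set C : Matrix (Fin n) (Fin n) ℝ := fun i j => ccfun (i:ℕ) (j:ℕ) with hCdef
  -- Y₀ agrees with y0fun
  have hY0' : ∀ i k : Fin n, Y₀ i k = y0fun (i:ℕ) (k:ℕ) := by
    intro i k
    rw [hY₀]
    simp only [y0fun, Fin.lt_def, Fin.ext_iff]
  -- Y₀ * C = 1
  have hY0C : Y₀ * C = 1 := by
    ext i j
    rw [Matrix.mul_apply]
    have : (∑ k : Fin n, Y₀ i k * C k j) = ∑ m ∈ Finset.range n, y0fun (i:ℕ) m * ccfun m (j:ℕ) := by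
      rw [← Fin.sum_univ_eq_sum_range (fun m => y0fun (i:ℕ) m * ccfun m (j:ℕ)) n]
      exact Finset.sum_congr rfl (fun k _ => by rw [hY0' i k])
    rw [this, y0c n (i:ℕ) (j:ℕ) i.isLt j.isLt, Matrix.one_apply]
    simp [Fin.ext_iff]
  have hC : Y₀⁻¹ = C := Matrix.inv_eq_right_inv hY0C
  -- invertibility of Y and Y₀
  have btY : Y.BlockTriangular OrderDual.toDual := fun i j h => hlower i j h
  have hdet : Y.det = 1 := by
    rw [Matrix.det_of_lowerTriangular Y btY]
    exact Finset.prod_eq_one fun i _ => hdiag i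
  have hU : IsUnit Y.det := by rw [hdet]; exact isUnit_one
  have hUY0 : IsUnit Y₀.det := by
    have : Y₀.det * C.det = 1 := by rw [← Matrix.det_mul, hY0C, Matrix.det_one]
    exact IsUnit.of_mul_eq_one _ this
  -- inverse of products
  have hZinv : ∀ i j : Fin n, Z⁻¹ i j = ∑ k : Fin n, B k i * B k j := by
    intro i j
    rw [hZ, Matrix.mul_inv_rev, ← Matrix.transpose_nonsing_inv, Matrix.mul_apply]
    exact Finset.sum_congr rfl (fun k _ => by rw [Matrix.transpose_apply])
  have hZ0inv : ∀ i j : Fin n, Z₀⁻¹ i j = ∑ k : Fin n, C k i * C k j := by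
    intro i j
    rw [hZ₀, Matrix.mul_inv_rev, ← Matrix.transpose_nonsing_inv, hC, Matrix.mul_apply]
    exact Finset.sum_congr rfl (fun k _ => by rw [Matrix.transpose_apply])
  -- absolute values of C
  have habsC : ∀ k i : Fin n, |C k i| =
      if (i:ℕ) ≤ (k:ℕ) then (aaSeq ((k:ℕ) - (i:ℕ)) : ℝ) else 0 := by
    intro k i
    show |ccfun (k:ℕ) (i:ℕ)| = _
    unfold ccfun
    by_cases h : (i:ℕ) ≤ (k:ℕ)
    · rw [if_pos h, if_pos h, abs_mul, abs_pow, abs_neg, abs_one, one_pow, one_mul,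
        Nat.abs_cast]
    · rw [if_neg h, if_neg h, abs_zero]
  have hBC : ∀ k i : Fin n, |B k i| ≤ |C k i| := by
    intro k i
    rw [habsC]
    by_cases h : (i:ℕ) ≤ (k:ℕ)
    · rw [if_pos h]; exact hBb k i
    · rw [if_neg h, hB0 k i (by omega), abs_zero]
  -- sign structure of C k i * C k j
  have hCval : ∀ a b : Fin n, (b:ℕ) ≤ (a:ℕ) →
      C a b = (-1:ℝ)^((a:ℕ)+(b:ℕ)) * (aaSeq ((a:ℕ)-(b:ℕ)) : ℝ) := by
    intro a b h
    show ccfun _ _ = _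
    unfold ccfun
    rw [if_pos h]
  have hCzero : ∀ a b : Fin n, ¬ ((b:ℕ) ≤ (a:ℕ)) → C a b = 0 := by
    intro a b h
    show ccfun _ _ = _
    unfold ccfun
    rw [if_neg h]
  have hsign : ∀ k i j : Fin n, C k i * C k j
      = (-1:ℝ)^((i:ℕ)+(j:ℕ)) * (|C k i| * |C k j|) := by
    intro k i j
    by_cases hi : (i:ℕ) ≤ (k:ℕ)
    · by_cases hj : (j:ℕ) ≤ (k:ℕ)
      · rw [hCval k i hi, hCval k j hj,
          abs_mul, abs_pow, abs_neg, abs_one, one_pow, one_mul, Nat.abs_cast,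
          abs_mul, abs_pow, abs_neg, abs_one, one_pow, one_mul, Nat.abs_cast]
        have hpow : (-1:ℝ)^((k:ℕ)+(i:ℕ)) * (-1:ℝ)^((k:ℕ)+(j:ℕ))
            = (-1:ℝ)^((i:ℕ)+(j:ℕ)) := by
          rw [← pow_add, show (k:ℕ)+(i:ℕ)+((k:ℕ)+(j:ℕ)) = 2*(k:ℕ) + ((i:ℕ)+(j:ℕ)) by ring,
            pow_add, pow_mul]
          norm_num
        calc (-1:ℝ)^((k:ℕ)+(i:ℕ)) * (aaSeq ((k:ℕ)-(i:ℕ)) : ℝ)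
              * ((-1:ℝ)^((k:ℕ)+(j:ℕ)) * (aaSeq ((k:ℕ)-(j:ℕ)) : ℝ))
            = ((-1:ℝ)^((k:ℕ)+(i:ℕ)) * (-1:ℝ)^((k:ℕ)+(j:ℕ)))
              * ((aaSeq ((k:ℕ)-(i:ℕ)) : ℝ) * (aaSeq ((k:ℕ)-(j:ℕ)) : ℝ)) := by ring
          _ = _ := by rw [hpow]
      · rw [hCzero k j hj]; simp
    · rw [hCzero k i hi]; simp
  intro i j
  rw [hZinv, hZ0inv]
  have h1 : |∑ k : Fin n, B k i * B k j| ≤ ∑ k : Fin n, |C k i| * |C k j| := by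
    calc |∑ k : Fin n, B k i * B k j| ≤ ∑ k : Fin n, |B k i * B k j| :=
          Finset.abs_sum_le_sum_abs _ _
      _ ≤ ∑ k : Fin n, |C k i| * |C k j| := by
          apply Finset.sum_le_sum
          intro k _
          rw [abs_mul]
          exact mul_le_mul (hBC k i) (hBC k j) (abs_nonneg _) (abs_nonneg _)
  have h2 : |∑ k : Fin n, C k i * C k j| = ∑ k : Fin n, |C k i| * |C k j| := by
    rw [Finset.sum_congr rfl (fun k _ => hsign k i j), ← Finset.mul_sum, abs_mul,
      abs_pow, abs_neg, abs_one, one_pow, one_mul]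
    exact abs_of_nonneg (Finset.sum_nonneg fun k _ =>
      mul_nonneg (abs_nonneg _) (abs_nonneg _))
  rw [h2]
  exact h1
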